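/- Let N ≥ 1 and let R be the N×N real matrix with entries R(n,m) = min(n,m) for n,m ∈ {1,…,N}. Then for every v : Fin N → ℂ, ∑_{n,m} v_n·conj(v_m)·min(n,m)² ≥ ∑_{n,m} v_n·conj(v_m)·min(n,m), i.e. R^{∘2} − R is positive semidefinite; moreover equality holds for v = e₁ (the first standard basis vector), so the largest constant κ for which ∑ v_n conj(v_m) min(n,m)² ≥ κ·∑ v_n conj(v_m) min(n,m) holds for all v is exactly κ = 1. Hence κ(1,N) = 1 for all N: the Cauchy semigroup satisfies CD(1,∞) on positive-frequency polynomials of every degree. -/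

import Mathlib

open Finset Complex

lemma gauss_re (a : ℕ) : ∑ k ∈ range (a + 1), (2 * k : ℝ) = a * (a + 1) := by
  induction a with
  | zero => simp
  | succ b ih => rw [Finset.sum_range_succ, ih]; push_cast; ring

lemma min_sq_sub_min (N : ℕ) (n m : Fin N) :
    ((min ((n : ℕ) + 1) ((m : ℕ) + 1) : ℝ)) ^ 2 - (min ((n : ℕ) + 1) ((m : ℕ) + 1) : ℝ)
      = ∑ k : Fin N, (if (k : ℕ) ≤ (n : ℕ) ∧ (k : ℕ) ≤ (m : ℕ) then (2 * (k : ℕ) : ℝ) else 0) := by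
  set a := min (n : ℕ) (m : ℕ) with ha
  have hlhs : (min ((n : ℕ) + 1) ((m : ℕ) + 1) : ℝ) = (a : ℝ) + 1 := by
    rcases le_total (n : ℕ) (m : ℕ) with h | h
    · rw [min_eq_left (by exact_mod_cast Nat.add_le_add_right h 1), ha,
        min_eq_left h]
    · rw [min_eq_right (by exact_mod_cast Nat.add_le_add_right h 1), ha,
        min_eq_right h]
  have hcond : ∀ k : ℕ, ((k ≤ (n : ℕ) ∧ k ≤ (m : ℕ)) ↔ k ≤ a) := fun k => (le_min_iff).symm
  have hrhs : ∑ k : Fin N, (if (k : ℕ) ≤ (n : ℕ) ∧ (k : ℕ) ≤ (m : ℕ) then (2 * (k : ℕ) : ℝ) else 0)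
      = (a : ℝ) * (a + 1) := by
    rw [Fin.sum_univ_eq_sum_range
      (fun k => if k ≤ (n : ℕ) ∧ k ≤ (m : ℕ) then (2 * k : ℝ) else 0) N]
    simp only [hcond]
    have hsub : range (a + 1) ⊆ range N := by
      refine Finset.range_subset_range.2 ?_
      have : a ≤ (n : ℕ) := min_le_left _ _
      omega
    rw [← Finset.sum_subset hsub (fun x _ hx => by
      rw [Finset.mem_range, Nat.lt_succ_iff] at hx
      simp [hx])]
    refine Eq.trans (Finset.sum_congr rfl fun x hx => ?_) (gauss_re a)
    exact if_pos (Nat.lt_succ_iff.1 (Finset.mem_range.1 hx))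
  rw [hlhs, hrhs]; ring

lemma main_ineq (N : ℕ) (v : Fin N → ℂ) :
    (∑ n : Fin N, ∑ m : Fin N,
        v n * (starRingEnd ℂ) (v m) * ((min ((n : ℕ) + 1) ((m : ℕ) + 1) : ℝ) : ℂ)).re
      ≤ (∑ n : Fin N, ∑ m : Fin N,
        v n * (starRingEnd ℂ) (v m) * ((min ((n : ℕ) + 1) ((m : ℕ) + 1) : ℝ) : ℂ) ^ 2).re := by
  set S : Fin N → ℂ := fun k => ∑ n : Fin N, (if (k : ℕ) ≤ (n : ℕ) then v n else 0) with hS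
  have key : (∑ n : Fin N, ∑ m : Fin N,
        v n * (starRingEnd ℂ) (v m) * ((min ((n : ℕ) + 1) ((m : ℕ) + 1) : ℝ) : ℂ) ^ 2)
      - (∑ n : Fin N, ∑ m : Fin N,
        v n * (starRingEnd ℂ) (v m) * ((min ((n : ℕ) + 1) ((m : ℕ) + 1) : ℝ) : ℂ))
      = ∑ k : Fin N, ((2 * (k : ℕ) : ℝ) : ℂ) * (S k * (starRingEnd ℂ) (S k)) := by
    rw [← Finset.sum_sub_distrib]
    simp only [← Finset.sum_sub_distrib]
    have step1 : ∀ n m : Fin N,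
        v n * (starRingEnd ℂ) (v m) * ((min ((n : ℕ) + 1) ((m : ℕ) + 1) : ℝ) : ℂ) ^ 2
          - v n * (starRingEnd ℂ) (v m) * ((min ((n : ℕ) + 1) ((m : ℕ) + 1) : ℝ) : ℂ)
        = ∑ k : Fin N, ((if (k : ℕ) ≤ (n : ℕ) then v n else 0)
            * (if (k : ℕ) ≤ (m : ℕ) then (starRingEnd ℂ) (v m) else 0)
            * ((2 * (k : ℕ) : ℝ) : ℂ)) := by
      intro n m
      have h := min_sq_sub_min N n m
      have h2 : ((min ((n : ℕ) + 1) ((m : ℕ) + 1) : ℝ) : ℂ) ^ 2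
          - ((min ((n : ℕ) + 1) ((m : ℕ) + 1) : ℝ) : ℂ)
          = ∑ k : Fin N,
            ((if (k : ℕ) ≤ (n : ℕ) ∧ (k : ℕ) ≤ (m : ℕ) then ((2 * (k : ℕ) : ℝ) : ℂ) else 0)) := by
        rw [show ((min ((n : ℕ) + 1) ((m : ℕ) + 1) : ℝ) : ℂ) ^ 2
            - ((min ((n : ℕ) + 1) ((m : ℕ) + 1) : ℝ) : ℂ)
            = (((min ((n : ℕ) + 1) ((m : ℕ) + 1) : ℝ) ^ 2
              - (min ((n : ℕ) + 1) ((m : ℕ) + 1) : ℝ) : ℝ) : ℂ) by push_cast; ring, h]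
        push_cast
        exact Finset.sum_congr rfl fun k _ => by split_ifs <;> simp
      rw [show v n * (starRingEnd ℂ) (v m) * ((min ((n : ℕ) + 1) ((m : ℕ) + 1) : ℝ) : ℂ) ^ 2
          - v n * (starRingEnd ℂ) (v m) * ((min ((n : ℕ) + 1) ((m : ℕ) + 1) : ℝ) : ℂ)
          = v n * (starRingEnd ℂ) (v m) * (((min ((n : ℕ) + 1) ((m : ℕ) + 1) : ℝ) : ℂ) ^ 2
            - ((min ((n : ℕ) + 1) ((m : ℕ) + 1) : ℝ) : ℂ)) by ring, h2, Finset.mul_sum]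
      refine Finset.sum_congr rfl fun k _ => ?_
      by_cases h1 : (k : ℕ) ≤ (n : ℕ) <;> by_cases h2 : (k : ℕ) ≤ (m : ℕ) <;>
        simp [h1, h2]
    calc (∑ n : Fin N, ∑ m : Fin N,
          (v n * (starRingEnd ℂ) (v m) * ((min ((n : ℕ) + 1) ((m : ℕ) + 1) : ℝ) : ℂ) ^ 2
            - v n * (starRingEnd ℂ) (v m) * ((min ((n : ℕ) + 1) ((m : ℕ) + 1) : ℝ) : ℂ)))
        = ∑ n : Fin N, ∑ m : Fin N, ∑ k : Fin N,
            ((if (k : ℕ) ≤ (n : ℕ) then v n else 0)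
              * (if (k : ℕ) ≤ (m : ℕ) then (starRingEnd ℂ) (v m) else 0)
              * ((2 * (k : ℕ) : ℝ) : ℂ)) := by
          exact Finset.sum_congr rfl fun n _ => Finset.sum_congr rfl fun m _ => step1 n m
      _ = ∑ k : Fin N, ∑ n : Fin N, ∑ m : Fin N,
            ((if (k : ℕ) ≤ (n : ℕ) then v n else 0)
              * (if (k : ℕ) ≤ (m : ℕ) then (starRingEnd ℂ) (v m) else 0)
              * ((2 * (k : ℕ) : ℝ) : ℂ)) := by
          exact Eq.trans (Finset.sum_congr rfl fun n _ => Finset.sum_comm) Finset.sum_comm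
      _ = ∑ k : Fin N, ((2 * (k : ℕ) : ℝ) : ℂ) * (S k * (starRingEnd ℂ) (S k)) := by
          refine Finset.sum_congr rfl fun k _ => ?_
          have hconj : (starRingEnd ℂ) (S k)
              = ∑ m : Fin N, (if (k : ℕ) ≤ (m : ℕ) then (starRingEnd ℂ) (v m) else 0) := by
            rw [hS, map_sum]
            exact Finset.sum_congr rfl fun m _ => by rw [apply_ite ((starRingEnd ℂ)), map_zero]
          rw [hconj, hS, Finset.sum_mul_sum, Finset.mul_sum]
          exact Finset.sum_congr rfl fun n _ => by
            rw [Finset.mul_sum]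
            exact Finset.sum_congr rfl fun m _ => by ring
  have hnonneg : 0 ≤ (∑ k : Fin N, ((2 * (k : ℕ) : ℝ) : ℂ) * (S k * (starRingEnd ℂ) (S k))).re := by
    rw [Complex.re_sum]
    refine Finset.sum_nonneg fun k _ => ?_
    rw [Complex.mul_conj, ← Complex.ofReal_mul, Complex.ofReal_re]
    exact mul_nonneg (by positivity) (Complex.normSq_nonneg _)
  have := hnonneg
  rw [← key, Complex.sub_re] at this
  linarith

theorem cauchy_curvature_one (N : ℕ) (hN : 1 ≤ N)
    (e₁ : Fin N → ℂ) (he₁ : e₁ = fun n : Fin N => if (n : ℕ) = 0 then (1 : ℂ) else 0) :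
    (∀ v : Fin N → ℂ,
      (∑ n : Fin N, ∑ m : Fin N,
          v n * (starRingEnd ℂ) (v m) * ((min ((n : ℕ) + 1) ((m : ℕ) + 1) : ℝ) : ℂ)).re
        ≤ (∑ n : Fin N, ∑ m : Fin N,
          v n * (starRingEnd ℂ) (v m) * ((min ((n : ℕ) + 1) ((m : ℕ) + 1) : ℝ) : ℂ) ^ 2).re) ∧
    ((∑ n : Fin N, ∑ m : Fin N,
        e₁ n * (starRingEnd ℂ) (e₁ m) * ((min ((n : ℕ) + 1) ((m : ℕ) + 1) : ℝ) : ℂ)).re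
      = (∑ n : Fin N, ∑ m : Fin N,
        e₁ n * (starRingEnd ℂ) (e₁ m) * ((min ((n : ℕ) + 1) ((m : ℕ) + 1) : ℝ) : ℂ) ^ 2).re) ∧
    IsGreatest {κ : ℝ | ∀ v : Fin N → ℂ,
      κ * (∑ n : Fin N, ∑ m : Fin N,
          v n * (starRingEnd ℂ) (v m) * ((min ((n : ℕ) + 1) ((m : ℕ) + 1) : ℝ) : ℂ)).re
        ≤ (∑ n : Fin N, ∑ m : Fin N,
          v n * (starRingEnd ℂ) (v m) * ((min ((n : ℕ) + 1) ((m : ℕ) + 1) : ℝ) : ℂ) ^ 2).re} 1 := by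
  haveI : NeZero N := ⟨by omega⟩
  have hsingle : ∀ (f : Fin N → Fin N → ℂ),
      (∑ n : Fin N, ∑ m : Fin N, e₁ n * (starRingEnd ℂ) (e₁ m) * f n m) = f 0 0 := by
    intro f
    rw [he₁]
    have hv0 : ∀ x : Fin N, ((x : ℕ) = 0) = (x = (0 : Fin N)) := fun x => by
      exact propext Fin.val_eq_zero_iff
    simp only [hv0]
    simp [apply_ite (starRingEnd ℂ), ite_mul, zero_mul, one_mul, mul_ite, mul_zero,
      Finset.sum_ite_eq', Finset.mem_univ]
  have hQ : (∑ n : Fin N, ∑ m : Fin N,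
      e₁ n * (starRingEnd ℂ) (e₁ m) * ((min ((n : ℕ) + 1) ((m : ℕ) + 1) : ℝ) : ℂ)).re = 1 := by
    rw [hsingle]; norm_num
  have hP : (∑ n : Fin N, ∑ m : Fin N,
      e₁ n * (starRingEnd ℂ) (e₁ m) * ((min ((n : ℕ) + 1) ((m : ℕ) + 1) : ℝ) : ℂ) ^ 2).re = 1 := by
    rw [hsingle]; norm_num
  refine ⟨main_ineq N, hQ.trans hP.symm, ⟨fun v => by simpa using main_ineq N v, ?_⟩⟩
  intro κ hκ
  have := hκ e₁
  rw [hQ, hP, mul_one] at this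
  exact this
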